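/- arXiv:2011.12732 — 2 statements merged into one kernel-verified Lean document; each statement's English description precedes it below -/
import Mathlib

section
/- Let β, γ > 0 be real constants with γ ≠ 1. Set r = |γ−1|/(γ+1), and for each integer n let n_γ = n if γ > 1 and n_γ = n − 1/2 if 0 < γ < 1, and put μₙ = (1/2)·ln r + n_γ π i. Then there exist a natural number N and a constant C > 0 such that for every integer n with |n| ≥ N there exists λₙ ∈ ℂ, λₙ ≠ 0, satisfying λₙ cosh λₙ + (γλₙ + β) sinh λₙ = 0 and |λₙ − μₙ| ≤ C/|n|. -/
open Complex Metric Set Function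

lemma log_lip {u v : ℂ} (hu : ‖u - 1‖ ≤ 1/2) (hv : ‖v - 1‖ ≤ 1/2) :
    ‖Complex.log u - Complex.log v‖ ≤ 2 * ‖u - v‖ := by
  have hs : Convex ℝ (Metric.closedBall (1:ℂ) (1/2)) := convex_closedBall _ _
  have hre : ∀ z ∈ Metric.closedBall (1:ℂ) (1/2), (1/2 : ℝ) ≤ ‖z‖ ∧ 0 < z.re := by
    intro z hz
    rw [Metric.mem_closedBall, dist_eq_norm] at hz
    constructor
    · have := norm_sub_norm_le (1:ℂ) z
      rw [norm_one, norm_sub_rev] at this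
      linarith
    · have h2 : |(z - 1).re| ≤ ‖z - 1‖ := Complex.abs_re_le_norm _
      simp only [Complex.sub_re, Complex.one_re] at h2
      have := abs_le.mp h2
      linarith [this.1]
  have key := hs.norm_image_sub_le_of_norm_hasFDerivWithin_le
    (f := Complex.log) (f' := fun z => (1 : ℂ →L[ℂ] ℂ).smulRight z⁻¹) (C := 2)
    (fun z hz => ((Complex.hasDerivAt_log (Complex.mem_slitPlane_iff.mpr
      (Or.inl (hre z hz).2))).hasFDerivAt).hasFDerivWithinAt)
    (fun z hz => by
      rw [ContinuousLinearMap.norm_smulRight_apply, norm_one, one_mul, norm_inv]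
      rw [inv_le_comm₀ (lt_of_lt_of_le (by norm_num) (hre z hz).1) (by norm_num)]
      linarith [(hre z hz).1])
    (x := v) (y := u)
    (by rw [Metric.mem_closedBall, dist_eq_norm]; exact hv)
    (by rw [Metric.mem_closedBall, dist_eq_norm]; exact hu)
  exact key

/-- `n_γ = n` if `γ > 1` and `n - 1/2` if `0 < γ < 1`. -/
noncomputable def ngamma (γ : ℝ) (n : ℤ) : ℝ := if 1 < γ then (n : ℝ) else (n : ℝ) - 1 / 2

/-- `μₙ = (1/2)·ln(|γ-1|/(γ+1)) + n_γ π i`. -/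
noncomputable def muSeq (γ : ℝ) (n : ℤ) : ℂ :=
  (Real.log (|γ - 1| / (γ + 1)) / 2 : ℝ) + (ngamma γ n * Real.pi : ℝ) * Complex.I

lemma exp_two_mu (γ : ℝ) (hγ : 0 < γ) (hγ1 : γ ≠ 1) (n : ℤ) :
    Complex.exp (2 * muSeq γ n) = ((γ:ℂ) - 1)/((γ:ℂ) + 1) := by
  have hγ1c : ((γ:ℂ) + 1) ≠ 0 := by
    have : ((γ + 1 : ℝ) : ℂ) ≠ 0 := Complex.ofReal_ne_zero.mpr (by linarith)
    push_cast at this; exact this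
  have hr : (0:ℝ) < |γ - 1| / (γ + 1) :=
    div_pos (abs_pos.mpr (sub_ne_zero.mpr hγ1)) (by linarith)
  have h1 : (2 : ℂ) * muSeq γ n
      = (Real.log (|γ-1|/(γ+1)) : ℂ) + ((2 * ngamma γ n * Real.pi : ℝ) : ℂ) * Complex.I := by
    unfold muSeq; push_cast; ring
  have h2 : Complex.exp ((Real.log (|γ-1|/(γ+1)) : ℂ)) = ((|γ-1|/(γ+1) : ℝ) : ℂ) := by
    rw [← Complex.ofReal_exp, Real.exp_log hr]
  rw [h1, Complex.exp_add, h2]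
  rcases lt_or_gt_of_ne hγ1 with h | h
  · have hng : ngamma γ n = (n : ℝ) - 1/2 := if_neg (by linarith)
    have h3 : ((2 * ngamma γ n * Real.pi : ℝ) : ℂ) * Complex.I
        = (n : ℂ) * (2 * (Real.pi : ℂ) * Complex.I) + (-((Real.pi : ℂ) * Complex.I)) := by
      rw [hng]; push_cast; ring
    rw [h3, Complex.exp_add, Complex.exp_int_mul_two_pi_mul_I, one_mul,
      Complex.exp_neg, Complex.exp_pi_mul_I]
    have habs : |γ - 1| = 1 - γ := by rw [abs_of_neg (by linarith : γ - 1 < 0)]; ring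
    rw [habs]
    push_cast
    field_simp
    ring
  · have hng : ngamma γ n = (n : ℝ) := if_pos h
    have h3 : ((2 * ngamma γ n * Real.pi : ℝ) : ℂ) * Complex.I
        = (n : ℂ) * (2 * (Real.pi : ℂ) * Complex.I) := by
      rw [hng]; push_cast; ring
    rw [h3, Complex.exp_int_mul_two_pi_mul_I, mul_one]
    have habs : |γ - 1| = γ - 1 := abs_of_pos (by linarith)
    rw [habs]; push_cast; ring

set_option maxHeartbeats 2000000 in
/-- for all large `|n|` the characteristic equation
`λ cosh λ + (γλ+β) sinh λ = 0` has a nonzero root `λₙ` with `|λₙ - μₙ| ≤ C/|n|`. -/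
theorem stmt10 (β γ : ℝ) (hβ : 0 < β) (hγ : 0 < γ) (hγ1 : γ ≠ 1) :
    ∃ (N : ℕ) (C : ℝ), 0 < C ∧
      ∀ n : ℤ, (N : ℤ) ≤ |n| →
        ∃ l : ℂ, l ≠ 0 ∧
          l * Complex.cosh l + (γ * l + β) * Complex.sinh l = 0 ∧
          ‖l - muSeq γ n‖ ≤ C / |(n : ℝ)| := by
  have hg1 : γ - 1 ≠ 0 := sub_ne_zero.mpr hγ1
  have hg2 : γ + 1 ≠ 0 := by positivity
  have hγc' : ((γ:ℂ) - 1) ≠ 0 := by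
    have : ((γ - 1 : ℝ) : ℂ) ≠ 0 := Complex.ofReal_ne_zero.mpr hg1
    push_cast at this; exact this
  have hγc : ((γ:ℂ) + 1) ≠ 0 := by
    have : ((γ + 1 : ℝ) : ℂ) ≠ 0 := Complex.ofReal_ne_zero.mpr hg2
    push_cast at this; exact this
  obtain ⟨a, ha⟩ : ∃ a : ℂ, a = ((β/(γ-1) : ℝ) : ℂ) := ⟨_, rfl⟩
  obtain ⟨b, hb⟩ : ∃ b : ℂ, b = ((β/(γ+1) : ℝ) : ℂ) := ⟨_, rfl⟩
  have hbim : b.im = 0 := by rw [hb]; exact Complex.ofReal_im _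
  have haa : ((γ:ℂ) - 1) * a = (β:ℂ) := by
    rw [ha]; push_cast; field_simp
  have hbb : ((γ:ℂ) + 1) * b = (β:ℂ) := by
    rw [hb]; push_cast; field_simp
  obtain ⟨C, hCdef⟩ : ∃ C : ℝ, C = ‖a - b‖ := ⟨_, rfl⟩
  have hC : 0 < C := by
    rw [hCdef]
    apply norm_pos_iff.mpr
    have hsub : a - b = ((β/(γ-1) - β/(γ+1) : ℝ) : ℂ) := by rw [ha, hb, Complex.ofReal_sub]
    rw [hsub]
    apply Complex.ofReal_ne_zero.mpr
    have hval : β/(γ-1) - β/(γ+1) = 2*β/((γ-1)*(γ+1)) := by field_simp; ring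
    rw [hval]
    exact div_ne_zero (by linarith) (mul_ne_zero hg1 hg2)
  refine ⟨⌈2*C⌉₊ + 2, C, hC, ?_⟩
  intro n hn
  obtain ⟨N, hN⟩ : ∃ N : ℕ, N = ⌈2*C⌉₊ + 2 := ⟨_, rfl⟩
  rw [← hN] at hn
  have hn' : (N : ℝ) ≤ |(n:ℝ)| := by exact_mod_cast hn
  have hn2 : (2:ℝ) ≤ |(n:ℝ)| := by
    have : (2:ℝ) ≤ (N:ℝ) := by rw [hN]; push_cast; linarith [Nat.cast_nonneg (α := ℝ) ⌈2*C⌉₊]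
    linarith
  have hnC : 2*C ≤ |(n:ℝ)| := by
    have h1 : 2*C ≤ (⌈2*C⌉₊ : ℝ) := Nat.le_ceil _
    have h2 : ((⌈2*C⌉₊ : ℕ) : ℝ) ≤ (N:ℝ) := by rw [hN]; push_cast; linarith
    linarith
  have hnpos : (0:ℝ) < |(n:ℝ)| := by linarith
  obtain ⟨μ, hμ⟩ : ∃ μ : ℂ, μ = muSeq γ n := ⟨_, rfl⟩
  obtain ⟨s, hs⟩ : ∃ s : Set ℂ, s = Metric.closedBall μ 1 := ⟨_, rfl⟩
  -- lower bound on |Im| in the ball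
  have hμim : μ.im = ngamma γ n * Real.pi := by
    rw [hμ]; simp [muSeq]
  have hngabs : |(n:ℝ)| - 1/2 ≤ |ngamma γ n| := by
    unfold ngamma
    split
    · linarith [abs_nonneg ((n:ℝ))]
    · have := abs_sub_abs_le_abs_sub (n:ℝ) (1/2)
      have h : |(1:ℝ)/2| = 1/2 := by norm_num
      rw [h] at this
      linarith
  have hbound : ∀ l ∈ s, |(n:ℝ)| ≤ |l.im| ∧ |(n:ℝ)| ≤ ‖l + b‖ := by
    intro l hl
    rw [hs, Metric.mem_closedBall, Complex.dist_eq] at hl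
    have h2 : |l.im - μ.im| ≤ 1 := by
      have := Complex.abs_im_le_norm (l - μ)
      rw [Complex.sub_im] at this
      linarith
    have h3 : |μ.im| - |l.im| ≤ 1 := by
      have := abs_sub_abs_le_abs_sub μ.im l.im
      rw [abs_sub_comm] at this
      linarith
    have h4 : (|(n:ℝ)| - 1/2) * Real.pi ≤ |μ.im| := by
      rw [hμim, abs_mul, abs_of_pos Real.pi_pos]
      have : (0:ℝ) < Real.pi := Real.pi_pos
      nlinarith [hngabs]
    have h5 : |(n:ℝ)| ≤ |l.im| := by
      nlinarith [Real.pi_gt_three]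
    refine ⟨h5, le_trans h5 ?_⟩
    have : |(l + b).im| ≤ ‖l + b‖ := Complex.abs_im_le_norm _
    rw [Complex.add_im, hbim, add_zero] at this
    exact this
  have hlbne : ∀ l ∈ s, l + b ≠ 0 := by
    intro l hl h
    have := (hbound l hl).2
    rw [h] at this
    simp at this
    rw [this] at hn2
    norm_num at hn2
  have hw : ∀ l ∈ s, ‖(l+a)/(l+b) - 1‖ ≤ C / |(n:ℝ)| := by
    intro l hl
    have hne := hlbne l hl
    have heq : (l+a)/(l+b) - 1 = (a - b)/(l+b) := by
      field_simp
      ring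
    rw [heq, norm_div, ← hCdef]
    gcongr
    exact (hbound l hl).2
  have hw12 : C / |(n:ℝ)| ≤ 1/2 := by
    rw [div_le_iff₀ hnpos]; linarith
  obtain ⟨φ, hφ⟩ : ∃ φ : ℂ → ℂ, φ = fun z => μ + (1/2 : ℂ) * Complex.log ((z+a)/(z+b)) :=
    ⟨_, rfl⟩
  have hφbound : ∀ l ∈ s, ‖φ l - μ‖ ≤ C / |(n:ℝ)| := by
    intro l hl
    have h1 : φ l - μ = (1/2 : ℂ) * Complex.log ((l+a)/(l+b)) := by
      simp only [hφ]; ring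
    rw [h1, norm_mul]
    have h2 : ‖(1/2 : ℂ)‖ = 1/2 := by norm_num
    rw [h2]
    have h3 : ‖Complex.log ((l+a)/(l+b))‖ ≤ 2 * ‖(l+a)/(l+b) - 1‖ := by
      have := log_lip (u := (l+a)/(l+b)) (v := 1) ?_ (by norm_num)
      · rwa [Complex.log_one, sub_zero] at this
      · exact le_trans (hw l hl) hw12
    have := hw l hl
    linarith
  have hmaps : MapsTo φ s s := by
    intro l hl
    rw [hs, Metric.mem_closedBall, Complex.dist_eq]
    have := hφbound l hl
    linarith [hw12]
  have hlip : LipschitzOnWith (1/2 : NNReal) φ s := by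
    apply LipschitzOnWith.of_dist_le_mul
    intro x hx y hy
    have hxb := hlbne x hx
    have hyb := hlbne y hy
    have hxb' := (hbound x hx).2
    have hyb' := (hbound y hy).2
    have h1 : dist (φ x) (φ y) = (1/2) * ‖Complex.log ((x+a)/(x+b)) - Complex.log ((y+a)/(y+b))‖ := by
      rw [Complex.dist_eq]
      simp only [hφ]
      have : μ + (1/2:ℂ) * Complex.log ((x+a)/(x+b)) - (μ + (1/2:ℂ) * Complex.log ((y+a)/(y+b)))
          = (1/2:ℂ) * (Complex.log ((x+a)/(x+b)) - Complex.log ((y+a)/(y+b))) := by ring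
      rw [this, norm_mul]
      norm_num
    have h3 : ‖Complex.log ((x+a)/(x+b)) - Complex.log ((y+a)/(y+b))‖
        ≤ 2 * ‖(x+a)/(x+b) - (y+a)/(y+b)‖ := by
      apply log_lip
      · exact le_trans (hw x hx) hw12
      · exact le_trans (hw y hy) hw12
    have h4 : (x+a)/(x+b) - (y+a)/(y+b) = (a - b) * (y - x) / ((x+b)*(y+b)) := by
      field_simp
      ring
    have h5 : ‖(x+a)/(x+b) - (y+a)/(y+b)‖
        ≤ C * dist x y / (|(n:ℝ)| * |(n:ℝ)|) := by
      rw [h4, norm_div, norm_mul, norm_mul, ← hCdef, Complex.dist_eq, norm_sub_rev]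
      gcongr
    have h6 : C * dist x y / (|(n:ℝ)| * |(n:ℝ)|) ≤ (1/2) * dist x y := by
      rw [div_le_iff₀ (by positivity)]
      have hd : (0:ℝ) ≤ dist x y := dist_nonneg
      have h7 : C * dist x y ≤ (|(n:ℝ)|/2) * dist x y := by nlinarith
      have h8 : (|(n:ℝ)|/2) * dist x y ≤ 1/2 * dist x y * (|(n:ℝ)| * |(n:ℝ)|) := by
        nlinarith [mul_nonneg hd (abs_nonneg ((n:ℝ)))]
      linarith
    have hcoe : ((1/2 : NNReal) : ℝ) = 1/2 := by norm_num
    rw [hcoe]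
    linarith
  have hcontr : ContractingWith (1/2 : NNReal) (hmaps.restrict φ s s) :=
    ⟨by rw [← NNReal.coe_lt_coe]; norm_num, hlip.to_restrict⟩
  have hscomp : IsComplete s := by rw [hs]; exact Metric.isClosed_closedBall.isComplete
  have hμs : μ ∈ s := by rw [hs]; exact Metric.mem_closedBall_self (by norm_num)
  obtain ⟨l, hls, hfix, -, -⟩ := hcontr.exists_fixedPoint' hscomp hmaps hμs (edist_ne_top _ _)
  have hfix' : φ l = l := hfix
  rw [hφ] at hfix'
  simp only at hfix'
  have hlim := (hbound l hls).1
  have hlbne' := hlbne l hls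
  refine ⟨l, ?_, ?_, ?_⟩
  · intro h
    rw [h] at hlim
    simp at hlim
    rw [hlim] at hn2
    norm_num at hn2
  · -- the characteristic equation
    obtain ⟨w, hwdef⟩ : ∃ w : ℂ, w = (l+a)/(l+b) := ⟨_, rfl⟩
    have hw1 : ‖w - 1‖ ≤ 1/2 := by
      rw [hwdef]; exact le_trans (hw l hls) hw12
    have hw0 : w ≠ 0 := by
      intro h
      rw [h] at hw1
      norm_num at hw1
    have hlog : Complex.log w = 2*(l - μ) := by
      rw [hwdef]; linear_combination (2:ℂ) * hfix'
    have hexp : w = Complex.exp (2*l) / Complex.exp (2*μ) := by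
      rw [← Complex.exp_sub, show (2:ℂ)*l - 2*μ = 2*(l-μ) by ring, ← hlog,
        Complex.exp_log hw0]
    have hexpμ : Complex.exp (2*μ) = ((γ:ℂ) - 1)/((γ:ℂ) + 1) := by
      rw [hμ]; exact exp_two_mu γ hγ hγ1 n
    have hE2 : Complex.exp (2*l) = Complex.exp l ^ 2 := by
      rw [two_mul, Complex.exp_add]; ring
    rw [hexpμ, hE2, hwdef, div_eq_iff hlbne'] at hexp
    have h9 : (l + a) * ((γ:ℂ) - 1) = Complex.exp l ^ 2 * ((γ:ℂ) + 1) * (l + b) := by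
      rw [hexp]; field_simp
    have key : Complex.exp l ^ 2 * (((γ:ℂ)+1)*l + (β:ℂ)) = ((γ:ℂ)-1)*l + (β:ℂ) := by
      linear_combination -h9 + haa - Complex.exp l ^ 2 * hbb
    rw [Complex.cosh, Complex.sinh, Complex.exp_neg]
    have hE := Complex.exp_ne_zero l
    field_simp
    linear_combination key
  · have h1 : l - muSeq γ n = φ l - μ := by rw [hfix, hμ]
    rw [h1]
    exact hφbound l hls
end

section
/- Let β, γ > 0 be real constants with γ ≠ 1. Set r = |γ−1|/(γ+1), n_γ = n if γ > 1 and n_γ = n − 1/2 if 0 < γ < 1, and μₙ = (1/2)·ln r + n_γ π i. Suppose (λₙ)_{n ∈ ℤ} is a sequence of nonzero complex numbers and C₀ > 0 is such that |λₙ − μₙ| ≤ C₀/|n| for all n ≠ 0. Define fₙ(x) = sinh(λₙ(x−1)). Then there exist C > 0 and N ∈ ℕ such that for all integers n with |n| ≥ N and all x ∈ [0,1]: |2 fₙ'(x)/λₙ − (r^{(x−1)/2} e^{i n_γ π (x−1)} + r^{−(x−1)/2} e^{−i n_γ π (x−1)})| ≤ C/|n| and |2 fₙ(x) − (r^{(x−1)/2}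 e^{i n_γ π (x−1)} − r^{−(x−1)/2} e^{−i n_γ π (x−1)})| ≤ C/|n|. -/
/-- The eigenfunction `f_λ(x) = sinh(λ(x-1))`. -/
noncomputable def efun (l : ℂ) : ℝ → ℂ := fun x => Complex.sinh (l * (x - 1))

lemma exp_diff_bound (a b : ℂ) (h1 : Norm.norm (a - b) ≤ 1) :
    Norm.norm (Complex.exp a - Complex.exp b)
      ≤ Real.exp b.re * (2 * Norm.norm (a - b)) := by
  have h : Complex.exp a - Complex.exp b = Complex.exp b * (Complex.exp (a - b) - 1) := by
    rw [mul_sub, mul_one, ← Complex.exp_add]; ring_nf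
  rw [h, norm_mul, Complex.norm_exp]
  exact mul_le_mul_of_nonneg_left (Complex.norm_exp_sub_one_le h1) (Real.exp_nonneg _)

/-- asymptotics of the eigenfunctions `fₙ(x) = sinh(λₙ(x-1))`
and their derivatives, uniformly for `x ∈ [0,1]`. -/
theorem stmt11 (β γ : ℝ) (hβ : 0 < β) (hγ : 0 < γ) (hγ1 : γ ≠ 1)
    (l : ℤ → ℂ) (hl : ∀ n, l n ≠ 0) (C₀ : ℝ) (hC₀ : 0 < C₀)
    (hasymp : ∀ n : ℤ, n ≠ 0 → Norm.norm (l n - muSeq γ n) ≤ C₀ / |(n : ℝ)|) :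
    ∃ (C : ℝ), 0 < C ∧ ∃ N : ℕ, ∀ n : ℤ, (N : ℤ) ≤ |n| → ∀ x ∈ Set.Icc (0:ℝ) 1,
      Norm.norm (2 * deriv (efun (l n)) x / l n
          - (((|γ - 1| / (γ + 1)) ^ ((x - 1) / 2) : ℝ)
              * Complex.exp (Complex.I * (ngamma γ n * Real.pi * (x - 1)))
            + ((|γ - 1| / (γ + 1)) ^ (-((x - 1) / 2)) : ℝ)
              * Complex.exp (-(Complex.I * (ngamma γ n * Real.pi * (x - 1)))))) ≤ C / |(n : ℝ)| ∧
      Norm.norm (2 * efun (l n) x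
          - (((|γ - 1| / (γ + 1)) ^ ((x - 1) / 2) : ℝ)
              * Complex.exp (Complex.I * (ngamma γ n * Real.pi * (x - 1)))
            - ((|γ - 1| / (γ + 1)) ^ (-((x - 1) / 2)) : ℝ)
              * Complex.exp (-(Complex.I * (ngamma γ n * Real.pi * (x - 1)))))) ≤ C / |(n : ℝ)| := by
  set r : ℝ := |γ - 1| / (γ + 1) with hrdef
  have hr : 0 < r := div_pos (abs_pos.2 (sub_ne_zero.2 hγ1)) (by linarith)
  set K : ℝ := Real.exp (|Real.log r| / 2) with hKdef
  have hK : 0 < K := Real.exp_pos _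
  refine ⟨4 * K * C₀, by positivity, ⌈C₀⌉₊ + 1, ?_⟩
  intro n hn x hx
  obtain ⟨hx0, hx1⟩ := hx
  have hn0 : n ≠ 0 := by
    intro h; rw [h] at hn; simp at hn; omega
  have hnR : (1 : ℝ) ≤ |(n : ℝ)| := by
    rw [← Int.cast_abs]
    exact_mod_cast (by omega : (1:ℤ) ≤ |n|)
  have hnpos : (0 : ℝ) < |(n : ℝ)| := by linarith
  have hnC : C₀ / |(n : ℝ)| ≤ 1 := by
    rw [div_le_one hnpos]
    have h2 : ((⌈C₀⌉₊ : ℝ) + 1) ≤ |(n : ℝ)| := by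
      rw [← Int.cast_abs]
      exact_mod_cast hn
    have := Nat.le_ceil C₀
    linarith
  -- the complex variable T = x - 1
  set T : ℂ := (x : ℂ) - 1 with hTdef
  have hTcast : T = ((x - 1 : ℝ) : ℂ) := by push_cast [hTdef]; ring
  have hTabs : Norm.norm T ≤ 1 := by
    rw [hTcast, Complex.norm_real, Real.norm_eq_abs]
    rw [abs_le]; constructor <;> linarith
  set μ : ℂ := muSeq γ n with hμdef
  -- derivative computation
  have hd : HasDerivAt (efun (l n)) (l n * Complex.cosh (l n * T)) x := by
    have h0 : HasDerivAt (fun y : ℝ => ((y : ℂ) - 1)) 1 x := by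
      simpa using (Complex.ofRealCLM.hasDerivAt (x := x)).sub_const 1
    have h1 : HasDerivAt (fun y : ℝ => (l n) * ((y : ℂ) - 1)) (l n) x := by
      simpa using h0.const_mul (l n)
    have := (Complex.hasDerivAt_sinh (l n * T)).comp x (by simpa [hTdef] using h1)
    have h2 : HasDerivAt (Complex.sinh ∘ fun y : ℝ => l n * ((y:ℂ) - 1)) (l n * Complex.cosh (l n * T)) x := by
      simpa [hTdef, mul_comm] using this
    exact h2
  have hderiv : deriv (efun (l n)) x = l n * Complex.cosh (l n * T) := hd.deriv
  -- rewrite in terms of exponentials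
  have hB : 2 * deriv (efun (l n)) x / l n = Complex.exp (l n * T) + Complex.exp (-(l n * T)) := by
    rw [hderiv, Complex.cosh]
    field_simp [hl n]
  have hC : 2 * efun (l n) x = Complex.exp (l n * T) - Complex.exp (-(l n * T)) := by
    show 2 * Complex.sinh (l n * ((x:ℂ) - 1)) = _
    rw [← hTdef, Complex.sinh]
    field_simp
  -- the target exponentials
  have hD : ((r ^ ((x - 1) / 2) : ℝ) : ℂ)
      * Complex.exp (Complex.I * ((ngamma γ n : ℝ) * (Real.pi : ℝ) * T))
      = Complex.exp (μ * T) := by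
    rw [Real.rpow_def_of_pos hr, Complex.ofReal_exp, ← Complex.exp_add]
    congr 1
    rw [hμdef, hTdef]
    unfold muSeq
    push_cast
    ring
  have hE : ((r ^ (-((x - 1) / 2)) : ℝ) : ℂ)
      * Complex.exp (-(Complex.I * ((ngamma γ n : ℝ) * (Real.pi : ℝ) * T)))
      = Complex.exp (-(μ * T)) := by
    rw [Real.rpow_def_of_pos hr, Complex.ofReal_exp, ← Complex.exp_add]
    congr 1
    rw [hμdef, hTdef]
    unfold muSeq
    push_cast
    ring
  -- bounds on the differences
  have hzabs : Norm.norm (l n * T - μ * T) ≤ C₀ / |(n : ℝ)| := by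
    have : l n * T - μ * T = (l n - μ) * T := by ring
    rw [this, norm_mul]
    calc Norm.norm (l n - μ) * Norm.norm T ≤ (C₀ / |(n:ℝ)|) * 1 :=
          mul_le_mul (hasymp n hn0) hTabs (norm_nonneg _) (by positivity)
      _ = C₀ / |(n:ℝ)| := mul_one _
  have hz1 : Norm.norm (l n * T - μ * T) ≤ 1 := hzabs.trans hnC
  have hre : (μ * T).re = Real.log r / 2 * (x - 1) := by
    rw [hμdef, hTdef]
    unfold muSeq
    simp [Complex.mul_re]
    left; rfl
  have hreK : Real.exp ((μ * T).re) ≤ K := by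
    rw [hre, hKdef]
    apply Real.exp_le_exp.2
    have := abs_le.1 (le_refl |Real.log r|)
    have h1 : |Real.log r / 2 * (x - 1)| ≤ |Real.log r| / 2 := by
      rw [abs_mul, abs_div]
      have : |x - 1| ≤ 1 := by rw [abs_le]; constructor <;> linarith
      calc |Real.log r| / |(2:ℝ)| * |x - 1| ≤ |Real.log r| / |(2:ℝ)| * 1 := by
            apply mul_le_mul_of_nonneg_left this (by positivity)
        _ = |Real.log r| / 2 := by norm_num
    linarith [abs_le.1 h1]
  have hreK' : Real.exp ((-(μ * T)).re) ≤ K := by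
    rw [Complex.neg_re, hre, hKdef]
    apply Real.exp_le_exp.2
    have h1 : |Real.log r / 2 * (x - 1)| ≤ |Real.log r| / 2 := by
      rw [abs_mul, abs_div]
      have : |x - 1| ≤ 1 := by rw [abs_le]; constructor <;> linarith
      calc |Real.log r| / |(2:ℝ)| * |x - 1| ≤ |Real.log r| / |(2:ℝ)| * 1 := by
            apply mul_le_mul_of_nonneg_left this (by positivity)
        _ = |Real.log r| / 2 := by norm_num
    linarith [abs_le.1 h1]
  have hb1 : Norm.norm (Complex.exp (l n * T) - Complex.exp (μ * T))
      ≤ K * (2 * (C₀ / |(n:ℝ)|)) := by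
    calc Norm.norm (Complex.exp (l n * T) - Complex.exp (μ * T))
        ≤ Real.exp ((μ * T).re) * (2 * Norm.norm (l n * T - μ * T)) :=
          exp_diff_bound _ _ hz1
      _ ≤ K * (2 * (C₀ / |(n:ℝ)|)) := by
          apply mul_le_mul hreK (by linarith) (by positivity) (le_of_lt hK)
  have hb2 : Norm.norm (Complex.exp (-(l n * T)) - Complex.exp (-(μ * T)))
      ≤ K * (2 * (C₀ / |(n:ℝ)|)) := by
    have habs : Norm.norm (-(l n * T) - -(μ * T)) = Norm.norm (l n * T - μ * T) := by
      rw [show -(l n * T) - -(μ * T) = -(l n * T - μ * T) by ring, norm_neg]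
    calc Norm.norm (Complex.exp (-(l n * T)) - Complex.exp (-(μ * T)))
        ≤ Real.exp ((-(μ * T)).re) * (2 * Norm.norm (-(l n * T) - -(μ * T))) :=
          exp_diff_bound _ _ (by rw [habs]; exact hz1)
      _ ≤ K * (2 * (C₀ / |(n:ℝ)|)) := by
          rw [habs]
          apply mul_le_mul hreK' (by linarith) (by positivity) (le_of_lt hK)
  constructor
  · have heq : 2 * deriv (efun (l n)) x / l n
        - (((r ^ ((x - 1) / 2) : ℝ) : ℂ)
            * Complex.exp (Complex.I * ((ngamma γ n : ℝ) * (Real.pi : ℝ) * T))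
          + ((r ^ (-((x - 1) / 2)) : ℝ) : ℂ)
            * Complex.exp (-(Complex.I * ((ngamma γ n : ℝ) * (Real.pi : ℝ) * T))))
        = (Complex.exp (l n * T) - Complex.exp (μ * T))
          + (Complex.exp (-(l n * T)) - Complex.exp (-(μ * T))) := by
      rw [hB, hD, hE]; ring
    calc Norm.norm (2 * deriv (efun (l n)) x / l n
          - (((r ^ ((x - 1) / 2) : ℝ) : ℂ)
              * Complex.exp (Complex.I * ((ngamma γ n : ℝ) * (Real.pi : ℝ) * T))
            + ((r ^ (-((x - 1) / 2)) : ℝ) : ℂ)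
              * Complex.exp (-(Complex.I * ((ngamma γ n : ℝ) * (Real.pi : ℝ) * T)))))
        = Norm.norm ((Complex.exp (l n * T) - Complex.exp (μ * T))
          + (Complex.exp (-(l n * T)) - Complex.exp (-(μ * T)))) := by rw [heq]
      _ ≤ _ + _ := norm_add_le _ _
      _ ≤ K * (2 * (C₀ / |(n:ℝ)|)) + K * (2 * (C₀ / |(n:ℝ)|)) := add_le_add hb1 hb2
      _ = 4 * K * C₀ / |(n:ℝ)| := by ring
  · have heq : 2 * efun (l n) x
        - (((r ^ ((x - 1) / 2) : ℝ) : ℂ)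
            * Complex.exp (Complex.I * ((ngamma γ n : ℝ) * (Real.pi : ℝ) * T))
          - ((r ^ (-((x - 1) / 2)) : ℝ) : ℂ)
            * Complex.exp (-(Complex.I * ((ngamma γ n : ℝ) * (Real.pi : ℝ) * T))))
        = (Complex.exp (l n * T) - Complex.exp (μ * T))
          - (Complex.exp (-(l n * T)) - Complex.exp (-(μ * T))) := by
      rw [hC, hD, hE]; ring
    calc Norm.norm (2 * efun (l n) x
          - (((r ^ ((x - 1) / 2) : ℝ) : ℂ)
              * Complex.exp (Complex.I * ((ngamma γ n : ℝ) * (Real.pi : ℝ) * T))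
            - ((r ^ (-((x - 1) / 2)) : ℝ) : ℂ)
              * Complex.exp (-(Complex.I * ((ngamma γ n : ℝ) * (Real.pi : ℝ) * T)))))
        = Norm.norm ((Complex.exp (l n * T) - Complex.exp (μ * T))
          - (Complex.exp (-(l n * T)) - Complex.exp (-(μ * T)))) := by rw [heq]
      _ = Norm.norm ((Complex.exp (l n * T) - Complex.exp (μ * T))
          + -(Complex.exp (-(l n * T)) - Complex.exp (-(μ * T)))) := by rw [sub_eq_add_neg]
      _ ≤ Norm.norm (Complex.exp (l n * T) - Complex.exp (μ * T))
          + Norm.norm (-(Complex.exp (-(l n * T)) - Complex.exp (-(μ * T)))) :=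
            norm_add_le _ _
      _ = Norm.norm (Complex.exp (l n * T) - Complex.exp (μ * T))
          + Norm.norm (Complex.exp (-(l n * T)) - Complex.exp (-(μ * T))) := by
            rw [norm_neg]
      _ ≤ K * (2 * (C₀ / |(n:ℝ)|)) + K * (2 * (C₀ / |(n:ℝ)|)) := add_le_add hb1 hb2
      _ = 4 * K * C₀ / |(n:ℝ)| := by ring
end
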